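/- Let A be an m×n₁ real matrix, B an m×n₂ real matrix, x₀ ∈ ℝ^{n₁}, y₀ ∈ ℝ^{n₂}, and set z = A x₀ + B y₀. Then the generalized demixing problem (GDP) succeeds (i.e., every (x,y) with ‖y‖₁ ≤ ‖y₀‖₁, A x + B y = z, and ‖x‖₁ ≤ ‖x₀‖₁ equals (x₀,y₀)) if and only if all three of the following hold: null(A) ∩ D(‖·‖₁, x₀) = {0}, null(B) ∩ D(‖·‖₁, y₀) = {0}, and (−A·D(‖·‖₁, x₀)) ∩ (B·D(‖·‖₁, y₀)) = {0}, where D(‖·‖₁, a) denotes the descent cone of the ℓ1 norm at a. -/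

import Mathlib

/-- Scaling down a descent direction stays in the descent "set". -/
lemma descent_scale {n : ℕ} (a h : Fin n → ℝ) {τ σ : ℝ}
    (hσ : 0 < σ) (hστ : σ ≤ τ)
    (hd : (∑ i, |a i + τ * h i|) ≤ ∑ i, |a i|) :
    (∑ i, |a i + σ * h i|) ≤ ∑ i, |a i| := by
  have hτ : 0 < τ := lt_of_lt_of_le hσ hστ
  set lm := σ / τ with hlm
  have hlm0 : 0 < lm := div_pos hσ hτ
  have hlm1 : lm ≤ 1 := (div_le_one hτ).2 hστ
  have key : ∀ i, |a i + σ * h i| ≤ (1 - lm) * |a i| + lm * |a i + τ * h i| := by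
    intro i
    have heq : a i + σ * h i = (1 - lm) * a i + lm * (a i + τ * h i) := by
      field_simp [hlm]
      have hc : σ / τ * τ = σ := div_mul_cancel₀ σ hτ.ne'
      linear_combination (-h i) * hc
    rw [heq]
    calc |(1 - lm) * a i + lm * (a i + τ * h i)|
        ≤ |(1 - lm) * a i| + |lm * (a i + τ * h i)| := abs_add_le _ _
      _ = (1 - lm) * |a i| + lm * |a i + τ * h i| := by
          rw [abs_mul, abs_mul, abs_of_nonneg (by linarith), abs_of_nonneg hlm0.le]
  calc (∑ i, |a i + σ * h i|) ≤ ∑ i, ((1 - lm) * |a i| + lm * |a i + τ * h i|) :=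
        Finset.sum_le_sum fun i _ => key i
    _ = (1 - lm) * (∑ i, |a i|) + lm * (∑ i, |a i + τ * h i|) := by
        rw [Finset.sum_add_distrib, Finset.mul_sum, Finset.mul_sum]
    _ ≤ (1 - lm) * (∑ i, |a i|) + lm * (∑ i, |a i|) := by
        have := mul_le_mul_of_nonneg_left hd hlm0.le
        linarith
    _ = ∑ i, |a i| := by ring

/-- Corollary 1: (GDP) succeeds iff the three conic conditions, stated with descent
cones of the ℓ1 norm, hold. Membership `h ∈ D(‖·‖₁, a)` is expressed as
`∃ τ > 0, ‖a + τ h‖₁ ≤ ‖a‖₁`. -/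
theorem gdp_succeeds_iff_descent_cones {m n₁ n₂ : ℕ}
    (A : Matrix (Fin m) (Fin n₁) ℝ) (B : Matrix (Fin m) (Fin n₂) ℝ)
    (x₀ : Fin n₁ → ℝ) (y₀ : Fin n₂ → ℝ) (z : Fin m → ℝ)
    (hz : z = A.mulVec x₀ + B.mulVec y₀) :
    (∀ x : Fin n₁ → ℝ, ∀ y : Fin n₂ → ℝ,
        (∑ i, |y i|) ≤ (∑ i, |y₀ i|) →
        A.mulVec x + B.mulVec y = z →
        (∑ i, |x i|) ≤ (∑ i, |x₀ i|) →
        x = x₀ ∧ y = y₀) ↔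
      ((∀ h : Fin n₁ → ℝ,
          A.mulVec h = 0 →
          (∃ τ : ℝ, 0 < τ ∧ (∑ i, |x₀ i + τ * h i|) ≤ (∑ i, |x₀ i|)) →
          h = 0) ∧
       (∀ h : Fin n₂ → ℝ,
          B.mulVec h = 0 →
          (∃ τ : ℝ, 0 < τ ∧ (∑ i, |y₀ i + τ * h i|) ≤ (∑ i, |y₀ i|)) →
          h = 0) ∧
       (∀ (u : Fin n₁ → ℝ) (v : Fin n₂ → ℝ),
          (∃ τ : ℝ, 0 < τ ∧ (∑ i, |x₀ i + τ * u i|) ≤ (∑ i, |x₀ i|)) →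
          (∃ τ : ℝ, 0 < τ ∧ (∑ i, |y₀ i + τ * v i|) ≤ (∑ i, |y₀ i|)) →
          -(A.mulVec u) = B.mulVec v →
          A.mulVec u = 0)) := by
  constructor
  · intro hGDP
    refine ⟨?_, ?_, ?_⟩
    · -- null(A) ∩ D(x₀) = {0}
      rintro h hA ⟨τ, hτ, hle⟩
      have hxfun : (x₀ + τ • h) = fun i => x₀ i + τ * h i := by
        funext i; simp [Pi.smul_apply, smul_eq_mul]
      have hAx : A.mulVec (x₀ + τ • h) + B.mulVec y₀ = z := by
        rw [Matrix.mulVec_add, Matrix.mulVec_smul, hA, smul_zero, add_zero, hz]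
      have := hGDP (x₀ + τ • h) y₀ le_rfl hAx (by rw [hxfun]; exact hle)
      have h0 : τ • h = 0 := by
        have := this.1
        have : x₀ + τ • h - x₀ = 0 := by rw [this]; simp
        simpa using this
      have : h = 0 := by
        funext i
        have := congrFun h0 i
        simp [Pi.smul_apply, smul_eq_mul] at this
        rcases this with h' | h'
        · exact absurd h' hτ.ne'
        · simpa using h'
      exact this
    · -- null(B) ∩ D(y₀) = {0}
      rintro h hB ⟨τ, hτ, hle⟩
      have hyfun : (y₀ + τ • h) = fun i => y₀ i + τ * h i := by
        funext i; simp [Pi.smul_apply, smul_eq_mul]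
      have hAx : A.mulVec x₀ + B.mulVec (y₀ + τ • h) = z := by
        rw [Matrix.mulVec_add, Matrix.mulVec_smul, hB, smul_zero, add_zero, hz]
      have := hGDP x₀ (y₀ + τ • h) (by rw [hyfun]; exact hle) hAx le_rfl
      have h0 : τ • h = 0 := by
        have := this.2
        have : y₀ + τ • h - y₀ = 0 := by rw [this]; simp
        simpa using this
      funext i
      have := congrFun h0 i
      simp [Pi.smul_apply, smul_eq_mul] at this
      rcases this with h' | h'
      · exact absurd h' hτ.ne'
      · simpa using h'
    · -- cone intersection condition
      rintro u v ⟨τ₁, hτ₁, hle₁⟩ ⟨τ₂, hτ₂, hle₂⟩ hAB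
      set τ := min τ₁ τ₂ with hτdef
      have hτ : 0 < τ := lt_min hτ₁ hτ₂
      have hle₁' := descent_scale x₀ u hτ (min_le_left _ _) hle₁
      have hle₂' := descent_scale y₀ v hτ (min_le_right _ _) hle₂
      have hxfun : (x₀ + τ • u) = fun i => x₀ i + τ * u i := by
        funext i; simp [Pi.smul_apply, smul_eq_mul]
      have hyfun : (y₀ + τ • v) = fun i => y₀ i + τ * v i := by
        funext i; simp [Pi.smul_apply, smul_eq_mul]
      have hsum : A.mulVec u + B.mulVec v = 0 := by
        rw [← hAB]; simp
      have hAx : A.mulVec (x₀ + τ • u) + B.mulVec (y₀ + τ • v) = z := by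
        rw [Matrix.mulVec_add, Matrix.mulVec_add, Matrix.mulVec_smul,
          Matrix.mulVec_smul, hz]
        have : τ • A.mulVec u + τ • B.mulVec v = 0 := by
          rw [← smul_add, hsum, smul_zero]
        have hre : A.mulVec x₀ + τ • A.mulVec u + (B.mulVec y₀ + τ • B.mulVec v)
            = A.mulVec x₀ + B.mulVec y₀ + (τ • A.mulVec u + τ • B.mulVec v) := by
          abel
        rw [hre, this, add_zero]
      have := hGDP (x₀ + τ • u) (y₀ + τ • v) (by rw [hyfun]; exact hle₂') hAx
        (by rw [hxfun]; exact hle₁')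
      have hu0 : u = 0 := by
        have h0 : τ • u = 0 := by
          have h1 := this.1
          have : x₀ + τ • u - x₀ = 0 := by rw [h1]; simp
          simpa using this
        funext i
        have := congrFun h0 i
        simp [Pi.smul_apply, smul_eq_mul] at this
        rcases this with h' | h'
        · exact absurd h' hτ.ne'
        · simpa using h'
      rw [hu0]
      simp
  · rintro ⟨h1, h2, h3⟩ x y hy hfeas hx
    set u := x - x₀ with hu
    set v := y - y₀ with hv
    have hsum : A.mulVec u + B.mulVec v = 0 := by
      rw [hu, hv, Matrix.mulVec_sub, Matrix.mulVec_sub]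
      have : A.mulVec x + B.mulVec y = A.mulVec x₀ + B.mulVec y₀ := by
        rw [hfeas, hz]
      rw [sub_add_sub_comm, this, sub_self]
    have hucone : ∃ τ : ℝ, 0 < τ ∧ (∑ i, |x₀ i + τ * u i|) ≤ (∑ i, |x₀ i|) := by
      refine ⟨1, one_pos, ?_⟩
      have heq : ∀ i, x₀ i + 1 * u i = x i := by intro i; simp [hu]
      calc (∑ i, |x₀ i + 1 * u i|) = ∑ i, |x i| :=
            Finset.sum_congr rfl fun i _ => by rw [heq i]
        _ ≤ ∑ i, |x₀ i| := hx
    have hvcone : ∃ τ : ℝ, 0 < τ ∧ (∑ i, |y₀ i + τ * v i|) ≤ (∑ i, |y₀ i|) := by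
      refine ⟨1, one_pos, ?_⟩
      have heq : ∀ i, y₀ i + 1 * v i = y i := by intro i; simp [hv]
      calc (∑ i, |y₀ i + 1 * v i|) = ∑ i, |y i| :=
            Finset.sum_congr rfl fun i _ => by rw [heq i]
        _ ≤ ∑ i, |y₀ i| := hy
    have hAu : A.mulVec u = 0 :=
      h3 u v hucone hvcone (neg_eq_of_add_eq_zero_right hsum)
    have hBv : B.mulVec v = 0 := by
      have := hsum; rw [hAu, zero_add] at this; exact this
    have hu0 : u = 0 := h1 u hAu hucone
    have hv0 : v = 0 := h2 v hBv hvcone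
    exact ⟨sub_eq_zero.mp hu0, sub_eq_zero.mp hv0⟩
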